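/- For 0 < λ₁ < λ₀ and θ ∈ (0,1), the adaptive penalty weight λ*(x;θ,λ₀,λ₁) = λ₁·p*(x;θ,λ₀,λ₁) + λ₀·(1 - p*(x;θ,λ₀,λ₁)) satisfies λ₁ < λ*(x;θ,λ₀,λ₁) < λ₀ for all x, is a strictly decreasing function of |x|, and converges to λ₁ as |x| → ∞. -/

import Mathlib

/-- Laplace density ψ(x|λ) = (λ/2) exp(-λ|x|). -/
noncomputable def psi (lam x : ℝ) : ℝ := (lam / 2) * Real.exp (-lam * |x|)

/-- Conditional slab probability p*(x;θ,λ₀,λ₁). -/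
noncomputable def pstar (θ lam0 lam1 x : ℝ) : ℝ :=
  θ * psi lam1 x / ((1 - θ) * psi lam0 x + θ * psi lam1 x)

/-- Adaptive penalty weight λ*(x;θ,λ₀,λ₁). -/
noncomputable def lamstar (θ lam0 lam1 x : ℝ) : ℝ :=
  lam1 * pstar θ lam0 lam1 x + lam0 * (1 - pstar θ lam0 lam1 x)

lemma lamstar_eq (θ lam0 lam1 : ℝ)
    (hθ : θ ∈ Set.Ioo (0 : ℝ) 1) (h1 : 0 < lam1) (h01 : lam1 < lam0) (x : ℝ) :
    lamstar θ lam0 lam1 x =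
      lam1 + (lam0 - lam1) /
        (1 + (θ * lam1 / ((1 - θ) * lam0)) * Real.exp ((lam0 - lam1) * |x|)) := by
  obtain ⟨hθ0, hθ1⟩ := hθ
  have h0 : 0 < lam0 := h1.trans h01
  have hθ' : 0 < 1 - θ := by linarith
  have ha : Real.exp (-lam1 * |x|) =
      Real.exp ((lam0 - lam1) * |x|) * Real.exp (-lam0 * |x|) := by
    rw [← Real.exp_add]; ring_nf
  have he : 0 < Real.exp ((lam0 - lam1) * |x|) := Real.exp_pos _
  have hb : 0 < Real.exp (-lam0 * |x|) := Real.exp_pos _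
  have hden : 0 < (1 - θ) * psi lam0 x + θ * psi lam1 x := by
    have : 0 < psi lam0 x := by
      unfold psi; positivity
    have : 0 < psi lam1 x := by
      unfold psi; positivity
    unfold psi; positivity
  have hden2 : 0 < 1 + (θ * lam1 / ((1 - θ) * lam0)) * Real.exp ((lam0 - lam1) * |x|) := by
    positivity
  unfold lamstar pstar psi at *
  rw [ha] at *
  field_simp
  ring

theorem lamstar_properties (θ lam0 lam1 : ℝ)
    (hθ : θ ∈ Set.Ioo (0 : ℝ) 1) (h1 : 0 < lam1) (h01 : lam1 < lam0) :
    (∀ x : ℝ, lam1 < lamstar θ lam0 lam1 x ∧ lamstar θ lam0 lam1 x < lam0) ∧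
    (∀ x y : ℝ, |x| < |y| → lamstar θ lam0 lam1 y < lamstar θ lam0 lam1 x) ∧
    Filter.Tendsto (lamstar θ lam0 lam1)
      (Filter.comap (fun x : ℝ => |x|) Filter.atTop) (nhds lam1) := by
  obtain ⟨hθ0, hθ1⟩ := hθ
  have h0 : 0 < lam0 := h1.trans h01
  have hθ' : 0 < 1 - θ := by linarith
  set k : ℝ := θ * lam1 / ((1 - θ) * lam0) with hk
  have hkpos : 0 < k := by positivity
  have hd : 0 < lam0 - lam1 := by linarith
  have key : ∀ x : ℝ, lamstar θ lam0 lam1 x =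
      lam1 + (lam0 - lam1) / (1 + k * Real.exp ((lam0 - lam1) * |x|)) :=
    fun x => lamstar_eq θ lam0 lam1 ⟨hθ0, hθ1⟩ h1 h01 x
  refine ⟨?_, ?_, ?_⟩
  · intro x
    rw [key x]
    have he : 0 < Real.exp ((lam0 - lam1) * |x|) := Real.exp_pos _
    have hden : 1 < 1 + k * Real.exp ((lam0 - lam1) * |x|) := by nlinarith
    constructor
    · have : 0 < (lam0 - lam1) / (1 + k * Real.exp ((lam0 - lam1) * |x|)) := by positivity
      linarith
    · have : (lam0 - lam1) / (1 + k * Real.exp ((lam0 - lam1) * |x|)) < lam0 - lam1 :=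
        div_lt_self hd hden
      linarith
  · intro x y hxy
    rw [key x, key y]
    have hlt : Real.exp ((lam0 - lam1) * |x|) < Real.exp ((lam0 - lam1) * |y|) := by
      apply Real.exp_lt_exp.mpr
      exact mul_lt_mul_of_pos_left hxy hd
    have hx' : 0 < 1 + k * Real.exp ((lam0 - lam1) * |x|) := by positivity
    have : (lam0 - lam1) / (1 + k * Real.exp ((lam0 - lam1) * |y|)) <
        (lam0 - lam1) / (1 + k * Real.exp ((lam0 - lam1) * |x|)) := by
      apply div_lt_div_of_pos_left hd hx'
      nlinarith
    linarith
  · have hfun : lamstar θ lam0 lam1 =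
        (fun t : ℝ => lam1 + (lam0 - lam1) / (1 + k * Real.exp ((lam0 - lam1) * t))) ∘
          (fun x : ℝ => |x|) := by
      funext x; exact key x
    rw [hfun]
    apply Filter.Tendsto.comp _ Filter.tendsto_comap
    have hdenom : Filter.Tendsto (fun t : ℝ => 1 + k * Real.exp ((lam0 - lam1) * t))
        Filter.atTop Filter.atTop := by
      apply Filter.tendsto_atTop_add_const_left
      apply Filter.Tendsto.const_mul_atTop hkpos
      exact Real.tendsto_exp_atTop.comp (Filter.tendsto_atTop_atTop_of_monotone
        (fun a b hab => by nlinarith) (fun b => ⟨b / (lam0 - lam1), by field_simp; exact le_rfl⟩))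
    have : Filter.Tendsto (fun t : ℝ =>
        (lam0 - lam1) / (1 + k * Real.exp ((lam0 - lam1) * t))) Filter.atTop (nhds 0) :=
      Filter.Tendsto.div_atTop tendsto_const_nhds hdenom
    have := Filter.Tendsto.const_add lam1 this
    simpa using this
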